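/- arXiv:2410.17228 — 3 statements merged into one kernel-verified Lean document; each statement's English description precedes it below -/
import Mathlib

section
/- Let 0 ≤ q ≤ 1 and m ∈ ℕ* with m(1−q) ≤ 1. Let X_m have the truncated geometric distribution on [m] giving mass (1−q)q^{j−1}/(1−q^m) to each j ∈ [m]. Then for every j ∈ [m], |P(X_m = j) − 1/m| ≤ 3(1−q). -/
/-- For `0 ≤ q ≤ 1`, `m ≥ 1` with `m(1-q) ≤ 1`, the truncated geometric mass
`P(X_m = j) = (1-q)q^{j-1}/(1-q^m)` (uniform `1/m` when `q = 1`) satisfies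
`|P(X_m = j) - 1/m| ≤ 3(1-q)` for all `j ∈ [m]`. -/
theorem tgeom_close_to_uniform (q : ℝ) (m : ℕ) (hq0 : 0 ≤ q) (hq1 : q ≤ 1)
    (hm : 1 ≤ m) (h : (m : ℝ) * (1 - q) ≤ 1) (j : ℕ) (hj1 : 1 ≤ j) (hjm : j ≤ m) :
    |(if q = 1 then 1 / (m : ℝ) else (1 - q) * q ^ (j - 1) / (1 - q ^ m)) - 1 / m|
      ≤ 3 * (1 - q) := by
  by_cases hq : q = 1
  · simp [hq]
  rw [if_neg hq]
  have hqlt : q < 1 := lt_of_le_of_ne hq1 hq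
  have hε : 0 < 1 - q := by linarith
  set S : ℝ := ∑ i ∈ Finset.range m, q ^ i with hSdef
  have hmpos : (0:ℝ) < m := by exact_mod_cast hm
  -- sum of indices
  have hsumid : ∀ n : ℕ, (∑ i ∈ Finset.range n, (i:ℝ)) = n * (n - 1) / 2 := by
    intro n
    induction n with
    | zero => simp
    | succ k ih =>
      rw [Finset.sum_range_succ, ih]
      push_cast
      ring
  -- Bernoulli lower bound for q^i
  have hbern : ∀ i : ℕ, 1 + (i:ℝ) * (q - 1) ≤ q ^ i := by
    intro i
    have := one_add_mul_le_pow (a := q - 1) (by linarith) i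
    simpa [add_comm] using this
  -- lower bound on S
  have hSlb : ((m:ℝ) + 1) / 2 ≤ S := by
    have h1 : (∑ i ∈ Finset.range m, (1 + (i:ℝ) * (q - 1))) ≤ S := by
      apply Finset.sum_le_sum
      intro i _
      exact hbern i
    have h2 : (∑ i ∈ Finset.range m, (1 + (i:ℝ) * (q - 1)))
        = m + (q - 1) * (m * (m - 1) / 2) := by
      rw [Finset.sum_add_distrib]
      simp [← Finset.sum_mul, hsumid m]
      ring
    rw [h2] at h1
    have hm1 : (1:ℝ) ≤ (m:ℝ) := by exact_mod_cast hm
    have h3 : (1 - q) * (m * (m - 1) / 2) ≤ (m - 1) / 2 := by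
      nlinarith
    linarith
  have hSpos : 0 < S := by linarith
  -- denominator factorization
  have hfac : 1 - q ^ m = (1 - q) * S := by
    have := geom_sum_mul q m
    -- (∑ i in range m, q^i) * (q - 1) = q ^ m - 1
    nlinarith [this]
  have hrw : (1 - q) * q ^ (j - 1) / (1 - q ^ m) = q ^ (j - 1) / S := by
    rw [hfac, mul_div_mul_left _ _ (ne_of_gt hε)]
  rw [hrw]
  -- pointwise bound on q^{m-1}
  have hqm1 : 1 - q ^ (m - 1) ≤ ((m:ℝ) - 1) * (1 - q) := by
    have := hbern (m - 1)
    have hc : ((m - 1 : ℕ) : ℝ) = (m:ℝ) - 1 := by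
      have : (1:ℕ) ≤ m := hm
      push_cast [Nat.cast_sub this]
      ring
    rw [hc] at this
    nlinarith
  -- numerator bound
  have hnum : |q ^ (j - 1) * m - S| ≤ (m:ℝ) * ((m - 1) * (1 - q)) := by
    have hrepr : q ^ (j - 1) * m - S = ∑ i ∈ Finset.range m, (q ^ (j - 1) - q ^ i) := by
      rw [Finset.sum_sub_distrib, Finset.sum_const, Finset.card_range]
      push_cast
      ring
    rw [hrepr]
    calc |∑ i ∈ Finset.range m, (q ^ (j - 1) - q ^ i)|
        ≤ ∑ i ∈ Finset.range m, |q ^ (j - 1) - q ^ i| := Finset.abs_sum_le_sum_abs _ _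
      _ ≤ ∑ i ∈ Finset.range m, ((m:ℝ) - 1) * (1 - q) := by
          apply Finset.sum_le_sum
          intro i hi
          have hi' : i ≤ m - 1 := Nat.le_sub_one_of_lt (Finset.mem_range.mp hi)
          have hj' : j - 1 ≤ m - 1 := by omega
          have b1 : q ^ (m - 1) ≤ q ^ i := pow_le_pow_of_le_one hq0 hq1 hi'
          have b2 : q ^ (m - 1) ≤ q ^ (j - 1) := pow_le_pow_of_le_one hq0 hq1 hj'
          have b3 : q ^ i ≤ 1 := pow_le_one₀ hq0 hq1
          have b4 : q ^ (j - 1) ≤ 1 := pow_le_one₀ hq0 hq1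
          rw [abs_le]
          constructor <;> nlinarith
      _ = (m:ℝ) * ((m - 1) * (1 - q)) := by
          rw [Finset.sum_const, Finset.card_range]; push_cast; ring
  -- final computation
  have hdiff : q ^ (j - 1) / S - 1 / m = (q ^ (j - 1) * m - S) / (S * m) := by
    field_simp
  rw [hdiff, abs_div, abs_of_pos (mul_pos hSpos hmpos)]
  rw [div_le_iff₀ (mul_pos hSpos hmpos)]
  calc |q ^ (j - 1) * m - S| ≤ (m:ℝ) * ((m - 1) * (1 - q)) := hnum
    _ ≤ 3 * (1 - q) * (S * m) := by
        have hm1 : (1:ℝ) ≤ (m:ℝ) := by exact_mod_cast hm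
        have key : (m:ℝ) - 1 ≤ 3 * S := by linarith
        nlinarith [mul_le_mul_of_nonneg_left (mul_le_mul_of_nonneg_right key hε.le) hmpos.le]
end

section
/- Let σ, σ′ ∈ S_n be such that r_i(σ) ≤ r_i(σ′) for all i ∈ [n], where r_i denotes right-inversion counts. Then for every pattern ρ ∈ S_r, |occ(ρ, σ) − occ(ρ, σ′)| ≤ 2 (inv(σ′) − inv(σ)) · n^{r−1}. -/
/-- Right-inversion count: `r_i(σ) = #{j > i : σ(j) < σ(i)}`. -/
def rCount {n : ℕ} (σ : Equiv.Perm (Fin n)) (i : Fin n) : ℕ :=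
  (Finset.univ.filter (fun j : Fin n => i < j ∧ σ j < σ i)).card

/-- Number of inversions of `σ`. -/
def invCount {n : ℕ} (σ : Equiv.Perm (Fin n)) : ℕ :=
  (Finset.univ.filter (fun p : Fin n × Fin n => p.1 < p.2 ∧ σ p.2 < σ p.1)).card

/-- Number of occurrences of the pattern `ρ ∈ S_r` in `τ ∈ S_n`, counted via strictly
increasing maps `f : Fin r → Fin n` on which `τ` induces the pattern `ρ`. -/
def occ {r n : ℕ} (ρ : Equiv.Perm (Fin r)) (τ : Equiv.Perm (Fin n)) : ℕ :=
  ((Finset.univ : Finset (Fin r → Fin n)).filter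
    (fun f => (∀ a b : Fin r, a < b → f a < f b) ∧
      (∀ a b : Fin r, ρ a < ρ b ↔ τ (f a) < τ (f b)))).card



lemma invCount_eq_sum {n : ℕ} (σ : Equiv.Perm (Fin n)) :
    invCount σ = ∑ i, rCount σ i := by
  rw [invCount]
  rw [Finset.card_eq_sum_card_fiberwise (f := Prod.fst) (t := Finset.univ)
    (fun x _ => Finset.mem_univ _)]
  refine Finset.sum_congr rfl fun i _ => ?_
  rw [rCount]
  apply Finset.card_bij (fun p _ => p.2)
  · intro p hp
    simp only [Finset.mem_filter, Finset.mem_univ, true_and] at hp ⊢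
    obtain ⟨⟨h1, h2⟩, h3⟩ := hp
    exact ⟨h3 ▸ h1, h3 ▸ h2⟩
  · intro p hp q hq hpq
    simp only [Finset.mem_filter] at hp hq
    exact Prod.ext (hp.2.trans hq.2.symm) hpq
  · intro j hj
    simp only [Finset.mem_filter, Finset.mem_univ, true_and] at hj
    exact ⟨(i, j), by simp [hj.1, hj.2], rfl⟩

lemma rCount_eq_rank {n : ℕ} (σ : Equiv.Perm (Fin n)) (i : Fin n) :
    rCount σ i =
      (Finset.univ.filter (fun u : Fin n => u < σ i ∧ ∀ j, j < i → σ j ≠ u)).card := by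
  rw [rCount]
  apply Finset.card_bij (fun j _ => σ j)
  · intro j hj
    simp only [Finset.mem_filter, Finset.mem_univ, true_and] at hj ⊢
    refine ⟨hj.2, fun l hl hne => ?_⟩
    exact absurd (σ.injective hne) (by omega)
  · intro a _ b _ hab; exact σ.injective hab
  · intro u hu
    simp only [Finset.mem_filter, Finset.mem_univ, true_and] at hu
    refine ⟨σ.symm u, ?_, by simp⟩
    simp only [Finset.mem_filter, Finset.mem_univ, true_and, Equiv.apply_symm_apply]
    refine ⟨?_, hu.1⟩
    rcases lt_trichotomy (σ.symm u) i with h | h | h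
    · exact absurd (by simp) (hu.2 _ h)
    · exfalso
      have : u = σ i := by rw [← h]; simp
      exact absurd hu.1 (by simp [this])
    · exact h

lemma code_inj {n : ℕ} (σ σ' : Equiv.Perm (Fin n))
    (h : ∀ i, rCount σ i = rCount σ' i) : σ = σ' := by
  have key : ∀ m : ℕ, ∀ i : Fin n, i.val = m → σ i = σ' i := by
    intro m
    induction m using Nat.strong_induction_on with
    | _ m ih =>
      intro i him
      have hagree : ∀ j : Fin n, j < i → σ j = σ' j := fun j hj =>
        ih j.val (by omega) j rfl
      have hr : (Finset.univ.filter (fun u : Fin n => u < σ i ∧ ∀ j, j < i → σ j ≠ u)).card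
          = (Finset.univ.filter (fun u : Fin n => u < σ' i ∧ ∀ j, j < i → σ j ≠ u)).card := by
        have := (rCount_eq_rank σ i).symm.trans ((h i).trans (rCount_eq_rank σ' i))
        rw [this]
        congr 1
        apply Finset.filter_congr
        intro u _
        constructor
        · rintro ⟨h1, h2⟩
          exact ⟨h1, fun j hj e => h2 j hj ((hagree j hj).symm.trans e)⟩
        · rintro ⟨h1, h2⟩
          exact ⟨h1, fun j hj e => h2 j hj ((hagree j hj).trans e)⟩
      by_contra hne
      -- wlog-style: strict subset gives card inequality
      rcases lt_or_gt_of_ne (fun e => hne e) with hlt | hlt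
      · have hss : (Finset.univ.filter (fun u : Fin n => u < σ i ∧ ∀ j, j < i → σ j ≠ u))
            ⊂ (Finset.univ.filter (fun u : Fin n => u < σ' i ∧ ∀ j, j < i → σ j ≠ u)) := by
          constructor
          · intro u hu
            simp only [Finset.mem_filter, Finset.mem_univ, true_and] at hu ⊢
            exact ⟨hu.1.trans hlt, hu.2⟩
          · intro hsub
            have hmem : σ i ∈ (Finset.univ.filter
                (fun u : Fin n => u < σ' i ∧ ∀ j, j < i → σ j ≠ u)) := by
              simp only [Finset.mem_filter, Finset.mem_univ, true_and]
              exact ⟨hlt, fun j hj => fun e => absurd (σ.injective e) (by omega)⟩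
            have : σ i ∈ (Finset.univ.filter
                (fun u : Fin n => u < σ i ∧ ∀ j, j < i → σ j ≠ u)) := hsub hmem
            simp at this
        exact absurd hr (by have := Finset.card_lt_card hss; omega)
      · have hss : (Finset.univ.filter (fun u : Fin n => u < σ' i ∧ ∀ j, j < i → σ j ≠ u))
            ⊂ (Finset.univ.filter (fun u : Fin n => u < σ i ∧ ∀ j, j < i → σ j ≠ u)) := by
          constructor
          · intro u hu
            simp only [Finset.mem_filter, Finset.mem_univ, true_and] at hu ⊢
            exact ⟨hu.1.trans hlt, hu.2⟩
          · intro hsub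
            have hmem : σ' i ∈ (Finset.univ.filter
                (fun u : Fin n => u < σ i ∧ ∀ j, j < i → σ j ≠ u)) := by
              simp only [Finset.mem_filter, Finset.mem_univ, true_and]
              refine ⟨hlt, fun j hj => fun e => ?_⟩
              rw [hagree j hj] at e
              exact absurd (σ'.injective e) (by omega)
            have : σ' i ∈ (Finset.univ.filter
                (fun u : Fin n => u < σ' i ∧ ∀ j, j < i → σ j ≠ u)) := hsub hmem
            simp at this
        exact absurd hr (by have := Finset.card_lt_card hss; omega)
  ext i
  exact congrArg Fin.val (key i.val i rfl)

lemma strictMono_eq_of_range_eq {r n : ℕ} {f g : Fin r → Fin n}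
    (hf : StrictMono f) (hg : StrictMono g) (h : Set.range f = Set.range g) : f = g := by
  have inst : WellFoundedLT (Fin r) := inferInstance
  exact (StrictMono.range_inj hf hg).mp h

lemma card_mono_through {n r : ℕ} (i : Fin n) :
    ((Finset.univ : Finset (Fin r → Fin n)).filter
      (fun f => (∀ a b : Fin r, a < b → f a < f b) ∧ ∃ a, f a = i)).card ≤ n ^ (r - 1) := by
  match r with
  | 0 =>
    have : ((Finset.univ : Finset (Fin 0 → Fin n)).filter
      (fun f => (∀ a b : Fin 0, a < b → f a < f b) ∧ ∃ a, f a = i)) = ∅ := by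
      apply Finset.filter_false_of_mem
      rintro f - ⟨-, ⟨a, -⟩⟩
      exact a.elim0
    simp [this]
  | (s + 1) =>
    have hcard : n ^ (s + 1 - 1) = Fintype.card (Fin s → Fin n) := by
      simp
    rw [hcard, ← Finset.card_univ]
    classical
    apply Finset.card_le_card_of_injOn
      (fun f => f ∘ (Fin.succAbove (if h : ∃ a, f a = i then h.choose else 0)))
      (fun f _ => Finset.mem_univ _)
    intro f hf g hg hfg
    simp only [Finset.mem_coe, Finset.mem_filter, Finset.mem_univ, true_and] at hf hg
    obtain ⟨hfm, hfe⟩ := hf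
    obtain ⟨hgm, hge⟩ := hg
    have hfm' : StrictMono f := fun a b hab => hfm a b hab
    have hgm' : StrictMono g := fun a b hab => hgm a b hab
    simp only [dif_pos hfe, dif_pos hge] at hfg
    have hrange : Set.range f = Set.range g := by
      have h1 : Set.range f = {i} ∪ Set.range (f ∘ Fin.succAbove hfe.choose) := by
        rw [Set.range_comp, Fin.range_succAbove]
        ext x
        simp only [Set.mem_range, Set.mem_union, Set.mem_singleton_iff, Set.mem_image,
          Set.mem_compl_iff]
        constructor
        · rintro ⟨a, rfl⟩
          by_cases ha : a = hfe.choose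
          · left; rw [ha]; exact hfe.choose_spec
          · right; exact ⟨a, by simpa using ha, rfl⟩
        · rintro (rfl | ⟨a, -, rfl⟩)
          · exact ⟨hfe.choose, hfe.choose_spec⟩
          · exact ⟨a, rfl⟩
      have h2 : Set.range g = {i} ∪ Set.range (g ∘ Fin.succAbove hge.choose) := by
        rw [Set.range_comp, Fin.range_succAbove]
        ext x
        simp only [Set.mem_range, Set.mem_union, Set.mem_singleton_iff, Set.mem_image,
          Set.mem_compl_iff]
        constructor
        · rintro ⟨a, rfl⟩
          by_cases ha : a = hge.choose
          · left; rw [ha]; exact hge.choose_spec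
          · right; exact ⟨a, by simpa using ha, rfl⟩
        · rintro (rfl | ⟨a, -, rfl⟩)
          · exact ⟨hge.choose, hge.choose_spec⟩
          · exact ⟨a, rfl⟩
      rw [h1, h2, hfg]
    exact strictMono_eq_of_range_eq hfm' hgm' hrange

lemma occ_near {n r : ℕ} (ρ : Equiv.Perm (Fin r)) (σ τ : Equiv.Perm (Fin n)) (i k : Fin n)
    (hagree : ∀ l, l ≠ i → l ≠ k → τ l = σ l) :
    |(occ ρ σ : ℤ) - occ ρ τ| ≤ 2 * (n : ℤ) ^ (r - 1) := by
  classical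
  set A := ((Finset.univ : Finset (Fin r → Fin n)).filter
    (fun f => (∀ a b : Fin r, a < b → f a < f b) ∧
      (∀ a b : Fin r, ρ a < ρ b ↔ σ (f a) < σ (f b)))) with hA
  set B := ((Finset.univ : Finset (Fin r → Fin n)).filter
    (fun f => (∀ a b : Fin r, a < b → f a < f b) ∧
      (∀ a b : Fin r, ρ a < ρ b ↔ τ (f a) < τ (f b)))) with hB
  set badI := ((Finset.univ : Finset (Fin r → Fin n)).filter
      (fun f => (∀ a b : Fin r, a < b → f a < f b) ∧ ∃ a, f a = i)) with hbadI
  set badK := ((Finset.univ : Finset (Fin r → Fin n)).filter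
      (fun f => (∀ a b : Fin r, a < b → f a < f b) ∧ ∃ a, f a = k)) with hbadK
  have hsub1 : A ⊆ B ∪ (badI ∪ badK) := by
    intro f hf
    simp only [hA, hB, hbadI, hbadK, Finset.mem_filter, Finset.mem_univ, true_and,
      Finset.mem_union] at hf ⊢
    by_cases hbad : (∃ a, f a = i) ∨ (∃ a, f a = k)
    · right
      rcases hbad with hb | hb
      · exact Or.inl ⟨hf.1, hb⟩
      · exact Or.inr ⟨hf.1, hb⟩
    · push_neg at hbad
      left
      refine ⟨hf.1, fun a b => ?_⟩
      rw [hagree (f a) (hbad.1 a) (hbad.2 a), hagree (f b) (hbad.1 b) (hbad.2 b)]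
      exact hf.2 a b
  have hsub2 : B ⊆ A ∪ (badI ∪ badK) := by
    intro f hf
    simp only [hA, hB, hbadI, hbadK, Finset.mem_filter, Finset.mem_univ, true_and,
      Finset.mem_union] at hf ⊢
    by_cases hbad : (∃ a, f a = i) ∨ (∃ a, f a = k)
    · right
      rcases hbad with hb | hb
      · exact Or.inl ⟨hf.1, hb⟩
      · exact Or.inr ⟨hf.1, hb⟩
    · push_neg at hbad
      left
      refine ⟨hf.1, fun a b => ?_⟩
      rw [← hagree (f a) (hbad.1 a) (hbad.2 a), ← hagree (f b) (hbad.1 b) (hbad.2 b)]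
      exact hf.2 a b
  have hbadcard : (badI ∪ badK).card ≤ 2 * n ^ (r - 1) := by
    calc (badI ∪ badK).card ≤ badI.card + badK.card := Finset.card_union_le _ _
    _ ≤ n ^ (r - 1) + n ^ (r - 1) := Nat.add_le_add (card_mono_through i) (card_mono_through k)
    _ = 2 * n ^ (r - 1) := by ring
  have h1 : A.card ≤ B.card + (badI ∪ badK).card :=
    le_trans (Finset.card_le_card hsub1) (Finset.card_union_le _ _)
  have h2 : B.card ≤ A.card + (badI ∪ badK).card :=
    le_trans (Finset.card_le_card hsub2) (Finset.card_union_le _ _)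
  have hocc1 : occ ρ σ = A.card := rfl
  have hocc2 : occ ρ τ = B.card := rfl
  rw [hocc1, hocc2, abs_sub_le_iff]
  constructor
  · have : (A.card : ℤ) ≤ B.card + 2 * n ^ (r - 1) := by exact_mod_cast le_trans h1 (by omega)
    linarith
  · have : (B.card : ℤ) ≤ A.card + 2 * n ^ (r - 1) := by exact_mod_cast le_trans h2 (by omega)
    linarith

lemma exists_step {n : ℕ} (σ σ' : Equiv.Perm (Fin n))
    (h : ∀ j, rCount σ j ≤ rCount σ' j) (i : Fin n) (hi : rCount σ i < rCount σ' i) :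
    ∃ τ : Equiv.Perm (Fin n), (∀ j, rCount τ j ≤ rCount σ' j) ∧
      invCount τ = invCount σ + 1 ∧
      ∃ a b : Fin n, ∀ l, l ≠ a → l ≠ b → τ l = σ l := by
  classical
  -- the set of positions after i carrying a larger value
  set S := Finset.univ.filter (fun j : Fin n => i < j ∧ σ i < σ j) with hS
  have hSne : S.Nonempty := by
    by_contra hemp
    rw [Finset.not_nonempty_iff_eq_empty] at hemp
    have hall : Finset.univ.filter (fun j : Fin n => i < j ∧ σ j < σ i)
        = Finset.univ.filter (fun j : Fin n => i < j) := by
      apply Finset.filter_congr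
      intro j _
      simp only [and_iff_left_iff_imp]
      intro hij
      rcases lt_trichotomy (σ j) (σ i) with hc | hc | hc
      · exact hc
      · exact absurd (σ.injective hc) (by intro e; subst e; exact lt_irrefl _ hij)
      · exfalso
        have : j ∈ S := by simp [hS, hij, hc]
        simp [hemp] at this
    have h1 : rCount σ i = (Finset.univ.filter (fun j : Fin n => i < j)).card := by
      rw [rCount, hall]
    have h2 : rCount σ' i ≤ (Finset.univ.filter (fun j : Fin n => i < j)).card := by
      apply Finset.card_le_card
      intro j hj
      simp only [Finset.mem_filter, Finset.mem_univ, true_and] at hj ⊢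
      exact hj.1
    omega
  obtain ⟨k, hkS, hkmin⟩ := S.exists_min_image (fun j => σ j) hSne
  simp only [hS, Finset.mem_filter, Finset.mem_univ, true_and] at hkS
  obtain ⟨hik, hvik⟩ := hkS
  have hmin : ∀ j : Fin n, i < j → σ i < σ j → σ k ≤ σ j := by
    intro j hj hvj
    exact hkmin j (by simp [hS, hj, hvj])
  -- the new permutation
  set τ : Equiv.Perm (Fin n) := σ * Equiv.swap i k with hτ
  have hτi : τ i = σ k := by simp [hτ, Equiv.swap_apply_left]
  have hτk : τ k = σ i := by simp [hτ, Equiv.swap_apply_right]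
  have hτl : ∀ l, l ≠ i → l ≠ k → τ l = σ l := by
    intro l h1 h2
    simp [hτ, Equiv.swap_apply_of_ne_of_ne h1 h2]
  have hne_ik : i ≠ k := ne_of_lt hik
  -- no value strictly between σ i and σ k at positions > i
  have hbetween : ∀ j : Fin n, i < j → j ≠ k → (σ j < σ i ↔ σ j < σ k) := by
    intro j hj hjk
    constructor
    · intro hh; exact hh.trans hvik
    · intro hh
      rcases lt_trichotomy (σ j) (σ i) with hc | hc | hc
      · exact hc
      · exact absurd (σ.injective hc) (by intro e; subst e; exact lt_irrefl _ hj)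
      · exact absurd (hmin j hj hc) (not_le.mpr hh)
  -- rCount at i increases by exactly 1
  have hrc_i : rCount τ i = rCount σ i + 1 := by
    have hset : Finset.univ.filter (fun j : Fin n => i < j ∧ τ j < τ i)
        = insert k (Finset.univ.filter (fun j : Fin n => i < j ∧ σ j < σ i)) := by
      ext j
      simp only [Finset.mem_filter, Finset.mem_univ, true_and, Finset.mem_insert]
      by_cases hjk : j = k
      · subst hjk
        simp only [hτk, hτi, true_or, iff_true]
        exact ⟨hik, hvik⟩
      · simp only [hjk, false_or]
        by_cases hji : j = i
        · subst hji; simp [lt_irrefl]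
        · rw [hτl j hji hjk, hτi]
          constructor
          · rintro ⟨h1, h2⟩; exact ⟨h1, (hbetween j h1 hjk).mpr h2⟩
          · rintro ⟨h1, h2⟩; exact ⟨h1, (hbetween j h1 hjk).mp h2⟩
    rw [rCount, rCount, hset, Finset.card_insert_of_notMem]
    simp only [Finset.mem_filter, Finset.mem_univ, true_and, not_and]
    intro _
    exact not_lt.mpr (le_of_lt hvik)
  -- rCount at k unchanged
  have hrc_k : rCount τ k = rCount σ k := by
    rw [rCount, rCount]
    congr 1
    apply Finset.filter_congr
    intro j _
    by_cases hjk : k < j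
    · have hji : j ≠ i := by intro e; subst e; exact absurd (hik.trans hjk) (lt_irrefl _)
      have hjk' : j ≠ k := ne_of_gt hjk
      rw [hτl j hji hjk', hτk]
      simp only [hjk, true_and]
      exact hbetween j (hik.trans hjk) hjk'
    · simp [hjk]
  -- rCount elsewhere unchanged
  have hrc_other : ∀ j : Fin n, j ≠ i → j ≠ k → rCount τ j = rCount σ j := by
    intro j hji hjk
    have hτj : τ j = σ j := hτl j hji hjk
    rcases lt_trichotomy j i with hc | hc | hc
    · -- j < i : reindex by the swap
      rw [rCount, rCount]
      apply Finset.card_bij (fun l _ => Equiv.swap i k l)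
      · intro l hl
        simp only [Finset.mem_filter, Finset.mem_univ, true_and] at hl ⊢
        obtain ⟨h1, h2⟩ := hl
        rw [hτj] at h2
        by_cases hli : l = i
        · subst hli
          rw [Equiv.swap_apply_left]
          rw [hτi] at h2
          exact ⟨hc.trans hik, h2⟩
        · by_cases hlk : l = k
          · subst hlk
            rw [Equiv.swap_apply_right]
            rw [hτk] at h2
            exact ⟨hc, h2⟩
          · rw [Equiv.swap_apply_of_ne_of_ne hli hlk]
            rw [hτl l hli hlk] at h2
            exact ⟨h1, h2⟩
      · intro a _ b _ hab
        exact (Equiv.swap i k).injective hab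
      · intro m hm
        simp only [Finset.mem_filter, Finset.mem_univ, true_and] at hm
        obtain ⟨h1, h2⟩ := hm
        refine ⟨Equiv.swap i k m, ?_, by simp⟩
        simp only [Finset.mem_filter, Finset.mem_univ, true_and]
        constructor
        · by_cases hmi : m = i
          · subst hmi; rw [Equiv.swap_apply_left]; exact hc.trans hik
          · by_cases hmk : m = k
            · subst hmk; rw [Equiv.swap_apply_right]; exact hc
            · rw [Equiv.swap_apply_of_ne_of_ne hmi hmk]; exact h1
        · rw [hτj]
          by_cases hmi : m = i
          · subst hmi; rw [Equiv.swap_apply_left, hτk]; exact h2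
          · by_cases hmk : m = k
            · subst hmk; rw [Equiv.swap_apply_right, hτi]; exact h2
            · rw [Equiv.swap_apply_of_ne_of_ne hmi hmk, hτl m hmi hmk]; exact h2
    · exact absurd hc hji
    · -- i < j
      rw [rCount, rCount]
      congr 1
      apply Finset.filter_congr
      intro l _
      rw [hτj]
      by_cases hlj : j < l
      · simp only [hlj, true_and]
        have hli : l ≠ i := by intro e; subst e; exact absurd (hc.trans hlj) (lt_irrefl _)
        by_cases hlk : l = k
        · rw [hlk, hτk]
          have hjlt : j < k := hlk ▸ hlj
          have hjk' : j ≠ k := ne_of_lt hjlt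
          constructor
          · intro hh
            rcases lt_trichotomy (σ i) (σ j) with hd | hd | hd
            · have := hmin j hc hd
              rcases lt_or_eq_of_le this with he | he
              · exact he
              · exact absurd (σ.injective he) (Ne.symm hjk')
            · exact absurd (σ.injective hd) (by intro e; subst e; exact lt_irrefl _ hc)
            · exact absurd hh (not_lt.mpr (le_of_lt hd))
          · intro hh
            exact hvik.trans hh
        · rw [hτl l hli hlk]
      · simp [hlj]
  -- assemble
  refine ⟨τ, ?_, ?_, i, k, hτl⟩
  · intro j
    by_cases hji : j = i
    · subst hji; rw [hrc_i]; omega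
    · by_cases hjk : j = k
      · subst hjk; rw [hrc_k]; exact h j
      · rw [hrc_other j hji hjk]; exact h j
  · rw [invCount_eq_sum, invCount_eq_sum]
    have : ∀ j : Fin n, rCount τ j = rCount σ j + if j = i then 1 else 0 := by
      intro j
      by_cases hji : j = i
      · subst hji; simp [hrc_i]
      · simp only [hji, if_false, add_zero]
        by_cases hjk : j = k
        · subst hjk; exact hrc_k
        · exact hrc_other j hji hjk
    rw [Finset.sum_congr rfl (fun j _ => this j), Finset.sum_add_distrib]
    simp

lemma main_aux {n r : ℕ} (ρ : Equiv.Perm (Fin r)) (σ' : Equiv.Perm (Fin n)) :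
    ∀ d : ℕ, ∀ σ : Equiv.Perm (Fin n), (∀ j, rCount σ j ≤ rCount σ' j) →
      invCount σ' = invCount σ + d →
      |(occ ρ σ : ℤ) - occ ρ σ'| ≤ 2 * d * (n : ℤ) ^ (r - 1) := by
  intro d
  induction d with
  | zero =>
    intro σ hle hinv
    have hsum : ∑ j, rCount σ j = ∑ j, rCount σ' j := by
      rw [← invCount_eq_sum, ← invCount_eq_sum]; omega
    have heq : ∀ j, rCount σ j = rCount σ' j := by
      intro j
      exact (Finset.sum_eq_sum_iff_of_le (fun j _ => hle j)).1 hsum j (Finset.mem_univ j)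
    have : σ = σ' := code_inj σ σ' heq
    subst this
    simp
  | succ d ih =>
    intro σ hle hinv
    have hex : ∃ i, rCount σ i < rCount σ' i := by
      by_contra hc
      push_neg at hc
      have heq : ∀ j, rCount σ j = rCount σ' j := fun j => le_antisymm (hle j) (hc j)
      have : invCount σ = invCount σ' := by
        rw [invCount_eq_sum, invCount_eq_sum]
        exact Finset.sum_congr rfl (fun j _ => heq j)
      omega
    obtain ⟨i, hi⟩ := hex
    obtain ⟨τ, hτle, hτinv, a, b, hab⟩ := exists_step σ σ' hle i hi
    have h1 : |(occ ρ σ : ℤ) - occ ρ τ| ≤ 2 * (n : ℤ) ^ (r - 1) :=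
      occ_near ρ σ τ a b hab
    have h2 : |(occ ρ τ : ℤ) - occ ρ σ'| ≤ 2 * d * (n : ℤ) ^ (r - 1) :=
      ih τ hτle (by omega)
    calc |(occ ρ σ : ℤ) - occ ρ σ'|
        ≤ |(occ ρ σ : ℤ) - occ ρ τ| + |(occ ρ τ : ℤ) - occ ρ σ'| := abs_sub_le _ _ _
      _ ≤ 2 * (n : ℤ) ^ (r - 1) + 2 * d * (n : ℤ) ^ (r - 1) := add_le_add h1 h2
      _ = 2 * (d + 1 : ℕ) * (n : ℤ) ^ (r - 1) := by push_cast; ring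

/-- If `r_i(σ) ≤ r_i(σ')` for all `i`, then
`|occ(ρ,σ) - occ(ρ,σ')| ≤ 2 (inv(σ') - inv(σ)) n^{r-1}`. -/
theorem occ_diff_le_of_rightCounts_le (n r : ℕ) (σ σ' : Equiv.Perm (Fin n))
    (h : ∀ i, rCount σ i ≤ rCount σ' i) (ρ : Equiv.Perm (Fin r)) :
    |(occ ρ σ : ℤ) - occ ρ σ'| ≤
      2 * ((invCount σ' : ℤ) - invCount σ) * (n : ℤ) ^ (r - 1) := by
  have hmono : invCount σ ≤ invCount σ' := by
    rw [invCount_eq_sum, invCount_eq_sum]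
    exact Finset.sum_le_sum (fun j _ => h j)
  obtain ⟨d, hd⟩ : ∃ d : ℕ, invCount σ' = invCount σ + d := ⟨invCount σ' - invCount σ, by omega⟩
  have := main_aux ρ σ' d σ h hd
  have hrw : ((invCount σ' : ℤ) - invCount σ) = (d : ℤ) := by
    rw [hd]; push_cast; ring
  rw [hrw]
  exact this
end

section
/- For every integer d ≥ 1, the identity ∑_{1 ≤ i, j ≤ d} C(i+j−2, i−1) · C(2d−i−j, d−i) = (2d−1)! / ((d−1)!)^2 holds, where C(·,·) denotes binomial coefficients. -/
open Finset Finset.Nat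

private lemma hockey (c : ℕ) : ∀ n : ℕ,
    ∑ p ∈ antidiagonal n, Nat.choose (c + p.2) p.2 = Nat.choose (c + n + 1) n := by
  intro n
  induction n with
  | zero => simp
  | succ n ih =>
    rw [sum_antidiagonal_succ]
    simp only
    rw [ih]
    rw [show c + (n + 1) = c + n + 1 from rfl, Nat.choose_succ_succ' (c + n + 1) n]
    exact Nat.add_comm _ _

private lemma vand : ∀ n a c : ℕ,
    ∑ p ∈ antidiagonal n, Nat.choose (a + p.1) p.1 * Nat.choose (c + p.2) p.2
      = Nat.choose (a + c + n + 1) n := by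
  intro n
  induction n with
  | zero => intro a c; simp
  | succ n ih =>
    intro a c
    induction a with
    | zero =>
      simp only [Nat.zero_add, Nat.choose_self, one_mul]
      rw [hockey c (n + 1)]
    | succ a iha =>
      have key : ∀ p : ℕ × ℕ,
          Nat.choose (a + 1 + (p.1 + 1)) (p.1 + 1) * Nat.choose (c + p.2) p.2
            = Nat.choose (a + 1 + p.1) p.1 * Nat.choose (c + p.2) p.2
              + Nat.choose (a + (p.1 + 1)) (p.1 + 1) * Nat.choose (c + p.2) p.2 := by
        intro p
        rw [← Nat.add_mul]
        congr 1
        rw [show a + 1 + (p.1 + 1) = (a + 1 + p.1) + 1 by ring,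
          Nat.choose_succ_succ (a + 1 + p.1) p.1]
        congr 2
        omega
      have h5 := sum_antidiagonal_succ (n := n)
          (f := fun p : ℕ × ℕ => Nat.choose (a + p.1) p.1 * Nat.choose (c + p.2) p.2)
      have h6 := sum_antidiagonal_succ (n := n)
          (f := fun p : ℕ × ℕ => Nat.choose (a + 1 + p.1) p.1 * Nat.choose (c + p.2) p.2)
      simp only at h5 h6
      rw [h6, Finset.sum_congr rfl (fun p _ => key p), Finset.sum_add_distrib, ih (a + 1) c]
      rw [show a + 1 + c + (n + 1) + 1 = (a + c + n + 2) + 1 by ring,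
        Nat.choose_succ_succ (a + c + n + 2) n]
      rw [show a + 1 + c + n + 1 = a + c + n + 2 by ring]
      rw [show a + c + (n + 1) + 1 = a + c + n + 2 by ring] at iha
      rw [h5] at iha
      simp only [Nat.choose_zero_right, one_mul, Nat.succ_eq_add_one] at iha ⊢
      omega

/-- `∑_{1≤i,j≤d} C(i+j-2, i-1) C(2d-i-j, d-i) = (2d-1)!/((d-1)!)²` for `d ≥ 1`. -/
theorem binomial_double_sum_identity (d : ℕ) (hd : 1 ≤ d) :
    ∑ i ∈ Finset.Icc 1 d, ∑ j ∈ Finset.Icc 1 d,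
        Nat.choose (i + j - 2) (i - 1) * Nat.choose (2 * d - i - j) (d - i)
      = (2 * d - 1).factorial / ((d - 1).factorial) ^ 2 := by
  obtain ⟨e, rfl⟩ : ∃ e, d = e + 1 := ⟨d - 1, by omega⟩
  have hIcc : ∀ f : ℕ → ℕ, ∑ i ∈ Finset.Icc 1 (e + 1), f i
      = ∑ i ∈ Finset.range (e + 1), f (i + 1) := by
    intro f
    rw [← Finset.Ico_add_one_right_eq_Icc, Finset.sum_Ico_eq_sum_range]
    apply Finset.sum_congr
    · congr 1
    · intro k _; congr 1; omega
  rw [hIcc, Finset.sum_congr rfl (fun a _ => hIcc _)]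
  have hinner : ∀ a ∈ Finset.range (e + 1),
      (∑ b ∈ Finset.range (e + 1),
          Nat.choose (a + 1 + (b + 1) - 2) (a + 1 - 1)
            * Nat.choose (2 * (e + 1) - (a + 1) - (b + 1)) (e + 1 - (a + 1)))
        = Nat.choose (2 * e + 1) e := by
    intro a ha
    rw [Finset.mem_range] at ha
    have hterm : ∀ b ∈ Finset.range (e + 1),
        Nat.choose (a + 1 + (b + 1) - 2) (a + 1 - 1)
            * Nat.choose (2 * (e + 1) - (a + 1) - (b + 1)) (e + 1 - (a + 1))
          = Nat.choose (a + b) b * Nat.choose ((e - a) + (e - b)) (e - b) := by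
      intro b hb
      rw [Finset.mem_range] at hb
      rw [show a + 1 + (b + 1) - 2 = a + b by omega, show a + 1 - 1 = a by omega,
        show 2 * (e + 1) - (a + 1) - (b + 1) = (e - a) + (e - b) by omega,
        show e + 1 - (a + 1) = e - a by omega,
        Nat.choose_symm_add, Nat.choose_symm_add]
    have hanti := Finset.Nat.sum_antidiagonal_eq_sum_range_succ_mk
        (fun p : ℕ × ℕ => Nat.choose (a + p.1) p.1 * Nat.choose ((e - a) + p.2) p.2) e
    simp only at hanti
    rw [Finset.sum_congr rfl hterm, ← hanti, vand e a (e - a)]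
    congr 1
    omega
  rw [Finset.sum_congr rfl hinner, Finset.sum_const, Finset.card_range, smul_eq_mul]
  rw [show 2 * (e + 1) - 1 = 2 * e + 1 by omega, show e + 1 - 1 = e by omega]
  symm
  apply Nat.div_eq_of_eq_mul_left (pow_pos (Nat.factorial_pos e) 2)
  have hc := Nat.choose_mul_factorial_mul_factorial (show e ≤ 2 * e + 1 by omega)
  rw [show 2 * e + 1 - e = e + 1 by omega] at hc
  rw [← hc, Nat.factorial_succ]
  ring
end
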